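/- Let k ≥ 1 and N ≥ 1 be integers, let P be a finite poset, and let 𝓠 be a family of subsets of [N]. If k · L_N(P; 𝓠) < N + 1 − lu_N(𝓠), then every k-coloring of B_N contains a monochromatic copy of P, i.e., for every function χ from the subsets of [N] to {1,…,k} there exist a color c and an injection f from P to subsets of [N] such that f(x) ⊆ f(y) whenever x ≤ y in P and χ(f(x)) = c for every x in P. -/
import Mathlib


/-- The Lubell function of a family of subsets of `[N]`. -/
def lubell (N : ℕ) (F : Finset (Finset (Fin N))) : ℚ :=
  ∑ A ∈ F, (1 : ℚ) / (N.choose A.card)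

lemma lubell_univ (N : ℕ) : lubell N Finset.univ = N + 1 := by
  classical
  unfold lubell
  rw [show (Finset.univ : Finset (Finset (Fin N))) = Finset.powerset Finset.univ by
    ext A; simp]
  rw [Finset.sum_powerset]
  have h1 : ∀ j ∈ Finset.range (N + 1),
      ∑ A ∈ Finset.powersetCard j (Finset.univ : Finset (Fin N)),
        (1 : ℚ) / (N.choose A.card) = 1 := by
    intro j hj
    rw [Finset.mem_range] at hj
    have hA : ∀ A ∈ Finset.powersetCard j (Finset.univ : Finset (Fin N)),
        (1 : ℚ) / (N.choose A.card) = (1 : ℚ) / (N.choose j) := by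
      intro A hA
      rw [Finset.mem_powersetCard] at hA
      rw [hA.2]
    rw [Finset.sum_congr rfl hA, Finset.sum_const, Finset.card_powersetCard]
    have hc : (N.choose j : ℚ) ≠ 0 := by
      have := Nat.choose_pos (Nat.lt_succ_iff.mp hj)
      exact_mod_cast this.ne'
    simp only [Finset.card_univ, Fintype.card_fin, nsmul_eq_mul]
    field_simp
  simp only [Finset.card_univ, Fintype.card_fin]
  rw [Finset.sum_congr rfl h1]
  simp

theorem stmt1 (k N : ℕ) (hk : 1 ≤ k) (hN : 1 ≤ N)
    (P : Type) [Fintype P] [PartialOrder P]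
    (Q : Finset (Finset (Fin N))) (L : ℚ)
    (hL : IsGreatest {x : ℚ | ∃ F : Finset (Finset (Fin N)),
        Disjoint F Q ∧
        (¬ ∃ f : P → Finset (Fin N), Function.Injective f ∧
            (∀ a, f a ∈ F) ∧ ∀ a b : P, a ≤ b → f a ⊆ f b) ∧
        lubell N F = x} L)
    (hlt : (k : ℚ) * L < (N : ℚ) + 1 - lubell N Q) :
    ∀ χ : Finset (Fin N) → Fin k, ∃ (c : Fin k) (f : P → Finset (Fin N)),
      Function.Injective f ∧ (∀ a b : P, a ≤ b → f a ⊆ f b) ∧ ∀ a, χ (f a) = c := by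
  classical
  intro χ
  by_contra h
  push_neg at h
  set F : Fin k → Finset (Finset (Fin N)) :=
    fun c => Finset.univ.filter (fun A => A ∉ Q ∧ χ A = c) with hF
  have hdisj : ∀ c, Disjoint (F c) Q := by
    intro c
    rw [Finset.disjoint_left]
    intro A hA hAQ
    rw [hF] at hA
    simp only [Finset.mem_filter] at hA
    exact hA.2.1 hAQ
  have hfree : ∀ c, ¬ ∃ f : P → Finset (Fin N), Function.Injective f ∧
      (∀ a, f a ∈ F c) ∧ ∀ a b : P, a ≤ b → f a ⊆ f b := by
    rintro c ⟨f, hinj, hmem, hmono⟩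
    obtain ⟨a, ha⟩ := h c f hinj hmono
    have := hmem a
    rw [hF] at this
    simp only [Finset.mem_filter] at this
    exact ha this.2.2
  have hle : ∀ c, lubell N (F c) ≤ L := fun c => hL.2 ⟨F c, hdisj c, hfree c, rfl⟩
  have hsum : lubell N Q + ∑ c : Fin k, lubell N (F c) = (N : ℚ) + 1 := by
    have key : ∑ c : Fin k, lubell N (F c)
        = ∑ A ∈ Finset.univ.filter (fun A => A ∉ Q), (1 : ℚ) / (N.choose A.card) := by
      rw [← Finset.sum_fiberwise (Finset.univ.filter (fun A => A ∉ Q)) χ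
        (fun A => (1 : ℚ) / (N.choose A.card))]
      apply Finset.sum_congr rfl
      intro c _
      unfold lubell
      apply Finset.sum_congr _ (fun _ _ => rfl)
      rw [hF, Finset.filter_filter]
    rw [key]
    have hQ : lubell N Q = ∑ A ∈ Finset.univ.filter (fun A => A ∈ Q),
        (1 : ℚ) / (N.choose A.card) := by
      unfold lubell
      congr 1
      simp
    rw [hQ, Finset.sum_filter_add_sum_filter_not]
    have := lubell_univ N
    unfold lubell at this
    rw [this]
  have hkL : ∑ c : Fin k, lubell N (F c) ≤ (k : ℚ) * L := by
    calc ∑ c : Fin k, lubell N (F c) ≤ ∑ _c : Fin k, L :=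
          Finset.sum_le_sum (fun c _ => hle c)
      _ = (k : ℚ) * L := by simp [mul_comm]
  linarith
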